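/- For every integer i ≥ 0, the quotient h(z,q,−q^{i+2})/h(z,q,−q) equals Σ_{k≥0} (−1)^k q^{k(k+1)/2} · [k+i choose k]_q · z^k, where [m choose k]_q is the Gaussian binomial coefficient. -/

import Mathlib

noncomputable section
open PowerSeries Finset

/-- The field `ℚ(q)` of rational functions in one indeterminate `q`. -/
abbrev K : Type := RatFunc ℚ

/-- The indeterminate `q`. -/
def q : K := RatFunc.X

/-- The coefficient `h_k(a,b) = (−1)^k q^{k(k−1)/2} ∏_{j=0}^{k−1}(a+q^j b) / ∏_{j=1}^{k}(1−q^j)`. -/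
def hk (a b : K) (k : ℕ) : K :=
  (-1) ^ k * q ^ (k.choose 2) * (∏ j ∈ range k, (a + q ^ j * b)) /
    (∏ j ∈ range k, (1 - q ^ (j + 1)))

/-- The series `h(z,a,b) = Σ_k h_k(a,b) z^k`. -/
def hser (a b : K) : PowerSeries K := PowerSeries.mk (hk a b)
/-- The Gaussian binomial coefficient `[m choose k]_q = (q;q)_m / ((q;q)_k (q;q)_{m−k})`. -/
def gb (m k : ℕ) : K :=
  (∏ j ∈ range m, (1 - q ^ (j + 1))) /
    ((∏ j ∈ range k, (1 - q ^ (j + 1))) * ∏ j ∈ range (m - k), (1 - q ^ (j + 1)))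


lemma qpow_ne_one (n : ℕ) : q ^ (n+1) ≠ 1 := by
  intro h
  have h2 : algebraMap (Polynomial ℚ) K (Polynomial.X ^ (n+1)) = algebraMap (Polynomial ℚ) K 1 := by
    simpa [map_pow, RatFunc.algebraMap_X, q] using h
  have h3 := RatFunc.algebraMap_injective ℚ h2
  have := congrArg Polynomial.natDegree h3
  simp [Polynomial.natDegree_X_pow] at this

lemma Dne (n : ℕ) : (∏ j ∈ range n, (1 - q^(j+1))) ≠ 0 := by
  apply prod_ne_zero_iff.2
  intro j _ h
  exact qpow_ne_one j (sub_eq_zero.mp h).symm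

lemma hser_one : hser q (-q) = 1 := by
  ext k
  cases k with
  | zero => simp [hser, hk]
  | succ n =>
    simp only [hser, coeff_mk, hk, coeff_one]
    rw [Finset.prod_eq_zero (Finset.mem_range.2 (Nat.succ_pos n))]
    · simp
    · simp

lemma tri (k : ℕ) : k.choose 2 + k = k * (k + 1) / 2 := by
  rw [Nat.choose_two_right]
  rcases k with _ | m
  · rfl
  · simp only [Nat.succ_sub_one]
    have h1 : 2 ∣ (m+1)*m := by rw [mul_comm]; exact (Nat.even_mul_succ_self m).two_dvd
    have h2 : (m+1)*(m+1+1) = (m+1)*m + 2*(m+1) := by ring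
    omega

lemma coeff_eq (i k : ℕ) :
    hk q (-q ^ (i + 2)) k = (-1) ^ k * q ^ (k * (k + 1) / 2) * gb (k + i) k := by
  have key : ∀ j, q + q ^ j * (-q ^ (i+2)) = q * (1 - q ^ ((i + j) + 1)) := by
    intro j; ring
  have hsplit : (∏ j ∈ range (i + k), (1 - q^(j+1)))
      = (∏ j ∈ range i, (1 - q^(j+1))) * ∏ j ∈ range k, (1 - q^((i+j)+1)) :=
    Finset.prod_range_add _ i k
  rw [hk, gb]
  simp only [key, Finset.prod_mul_distrib, Finset.prod_const, Finset.card_range]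
  have hik : k + i - k = i := by omega
  rw [hik]
  have h1 : ∏ j ∈ range k, (1 - q^((i+j)+1)) =
      (∏ j ∈ range (k + i), (1 - q^(j+1))) / (∏ j ∈ range i, (1 - q^(j+1))) := by
    rw [eq_div_iff (Dne i), mul_comm, ← hsplit, add_comm k i]
  rw [h1]
  field_simp [Dne i, Dne k, Dne (k+i)]
  rw [show k*(k+1)/2 = k.choose 2 + k from (tri k).symm, pow_add]

/-- Prodinger's formula (3.7): for every `i ≥ 0`,
`h(z,q,−q^{i+2})/h(z,q,−q) = Σ_k (−1)^k q^{k(k+1)/2} [k+i choose k]_q z^k`. -/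
theorem prodinger_formula (i : ℕ) :
    hser q (-q ^ (i + 2)) * (hser q (-q))⁻¹ =
      PowerSeries.mk (fun k => (-1) ^ k * q ^ (k * (k + 1) / 2) * gb (k + i) k) := by
  rw [hser_one, inv_one, mul_one]
  ext k
  simp [hser, coeff_eq]

end
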